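/- Suppose d_i - k q̄ - ∑_{i'∈V(i)} 1/(2r(i,i')) < 0 < d_i - k q̄ + ∑_{i'∈V(i)} 3/(2r(i,i')). Then for each fixed λ_{-i} with positive components there exists a unique x > 0 such that F_i(x, λ_{-i}) = k q̄. Moreover, the resulting function g_i^k(λ_{-i}) is increasing in each coordinate λ_{i'} for i' ∈ V(i). -/

import Mathlib

lemma term_eq (x m rr : ℝ) (hxm : 0 < x + m) (hrr : 0 < rr) :
    (m - x) / (rr * (x + m)) + (m - x) ^ 2 / (2 * rr * (x + m) ^ 2)
      = (3*m + x) * (m - x) / (2 * rr * (x + m) ^ 2) := by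
  have h1 : x + m ≠ 0 := hxm.ne'
  have h2 : rr ≠ 0 := hrr.ne'
  field_simp
  ring

lemma term_lt_x {rr m x y : ℝ} (hrr : 0 < rr) (hm : 0 < m) (hx : 0 < x) (hxy : x < y) :
    (3*m + y) * (m - y) / (2 * rr * (y + m) ^ 2)
      < (3*m + x) * (m - x) / (2 * rr * (x + m) ^ 2) := by
  have hy : 0 < y := hx.trans hxy
  rw [div_lt_div_iff₀ (by positivity) (by positivity)]
  nlinarith [mul_pos hrr (mul_pos (mul_pos (mul_pos hm hm) (sub_pos.2 hxy))
    (show (0:ℝ) < x + y + 2*m by linarith))]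

lemma term_lt_m {rr x m m' : ℝ} (hrr : 0 < rr) (hx : 0 < x) (hm : 0 < m) (hmm : m < m') :
    (3*m + x) * (m - x) / (2 * rr * (x + m) ^ 2)
      < (3*m' + x) * (m' - x) / (2 * rr * (x + m') ^ 2) := by
  have hm' : 0 < m' := hm.trans hmm
  rw [div_lt_div_iff₀ (by positivity) (by positivity)]
  nlinarith [mul_pos hrr (mul_pos (mul_pos hx (sub_pos.2 hmm))
    (show (0:ℝ) < x*(m+m') + 2*m*m' by positivity))]

lemma term_lb {rr m x : ℝ} (hrr : 0 < rr) (hm : 0 < m) (hx : 0 < x) :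
    3/(2*rr) - x * (4/(rr*m)) ≤ (3*m + x) * (m - x) / (2 * rr * (x + m) ^ 2) := by
  have h : 3/(2*rr) - x * (4/(rr*m)) = (3*m - 8*x)/(2*rr*m) := by
    field_simp; ring
  rw [h, div_le_div_iff₀ (by positivity) (by positivity)]
  nlinarith [mul_nonneg hrr.le (mul_nonneg hm.le (sq_nonneg x)),
    mul_nonneg hrr.le (mul_nonneg hx.le (sq_nonneg x))]

lemma term_ub {rr m x : ℝ} (hrr : 0 < rr) (hm : 0 < m) (hx : 0 < x) :
    (3*m + x) * (m - x) / (2 * rr * (x + m) ^ 2) ≤ -(1/(2*rr)) + (2*m^2/rr)/x^2 := by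
  have h : -(1/(2*rr)) + (2*m^2/rr)/x^2 = (4*m^2 - x^2)/(2*rr*x^2) := by
    field_simp; ring
  rw [h, div_le_div_iff₀ (by positivity) (by positivity)]
  nlinarith [mul_nonneg hrr.le (mul_nonneg (mul_nonneg hm.le hm.le) (mul_nonneg hm.le hx.le)),
    mul_nonneg hrr.le (mul_nonneg (mul_nonneg hm.le hm.le) (mul_nonneg hm.le hm.le))]

/-- Existence and uniqueness of the level point `g_i^k(λ_{-i})`, the unique `x > 0` with
`F_i(x, λ_{-i}) = k q̄`, together with strict monotonicity of `g_i^k` in each neighbor's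
dual variable. -/
theorem stmt_11 {I : Type*} [Fintype I] (Vi : Finset I)
    (r : I → ℝ) (hr : ∀ i' ∈ Vi, 0 < r i')
    (d qbar : ℝ) (hqbar : 0 < qbar) (k : ℕ)
    (hlow : d - k * qbar - ∑ i' ∈ Vi, 1 / (2 * r i') < 0)
    (hhigh : 0 < d - k * qbar + ∑ i' ∈ Vi, 3 / (2 * r i'))
    (F : ℝ → (I → ℝ) → ℝ)
    (hF : ∀ x μ, F x μ = d + ∑ i' ∈ Vi, ((μ i' - x) / (r i' * (x + μ i')) +
      (μ i' - x) ^ 2 / (2 * r i' * (x + μ i') ^ 2))) :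
    (∀ μ : I → ℝ, (∀ j, 0 < μ j) → ∃! x : ℝ, 0 < x ∧ F x μ = k * qbar) ∧
    (∀ g : (I → ℝ) → ℝ,
      (∀ μ : I → ℝ, (∀ j, 0 < μ j) → 0 < g μ ∧ F (g μ) μ = k * qbar) →
      ∀ i' ∈ Vi, ∀ μ μ' : I → ℝ, (∀ j, 0 < μ j) → (∀ j, 0 < μ' j) →
        (∀ j, j ≠ i' → μ j = μ' j) → μ i' < μ' i' → g μ < g μ') := by
  -- Vi is nonempty
  have hVi : Vi.Nonempty := by
    rcases Vi.eq_empty_or_nonempty with h | h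
    · subst h; simp only [Finset.sum_empty] at hlow hhigh; linarith
    · exact h
  -- closed form of F for positive x
  have hFform : ∀ (μ : I → ℝ), (∀ j, 0 < μ j) → ∀ x : ℝ, 0 < x →
      F x μ = d + ∑ i' ∈ Vi, (3 * μ i' + x) * (μ i' - x) / (2 * r i' * (x + μ i') ^ 2) := by
    intro μ hμ x hx
    rw [hF]
    congr 1
    refine Finset.sum_congr rfl fun i hi => ?_
    exact term_eq x (μ i) (r i) (by have := hμ i; linarith) (hr i hi)
  -- strict antitonicity in x
  have hanti : ∀ (μ : I → ℝ), (∀ j, 0 < μ j) → ∀ x y : ℝ, 0 < x → x < y →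
      F y μ < F x μ := by
    intro μ hμ x y hx hxy
    rw [hFform μ hμ x hx, hFform μ hμ y (hx.trans hxy)]
    have := Finset.sum_lt_sum_of_nonempty hVi
      (f := fun i => (3 * μ i + y) * (μ i - y) / (2 * r i * (y + μ i) ^ 2))
      (g := fun i => (3 * μ i + x) * (μ i - x) / (2 * r i * (x + μ i) ^ 2))
      (fun i hi => term_lt_x (hr i hi) (hμ i) hx hxy)
    linarith
  constructor
  · -- existence and uniqueness
    intro μ hμ
    obtain ⟨S, hS⟩ : ∃ y : ℝ, y = ∑ i' ∈ Vi, 4 / (r i' * μ i') := ⟨_, rfl⟩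
    have hSnn : 0 ≤ S := hS ▸ Finset.sum_nonneg fun i hi => by
      have := hr i hi; have := hμ i; positivity
    obtain ⟨ε, hε⟩ : ∃ y : ℝ, y = d - k * qbar + ∑ i' ∈ Vi, 3 / (2 * r i') := ⟨_, rfl⟩
    have hεpos : 0 < ε := by rw [hε]; exact hhigh
    obtain ⟨x₀, hx₀⟩ : ∃ y : ℝ, y = ε / (2 * (1 + S)) := ⟨_, rfl⟩
    have hx₀pos : 0 < x₀ := by rw [hx₀]; exact div_pos hεpos (by linarith)
    -- lower endpoint: F x₀ μ > k qbar
    have hFx₀ : (k : ℝ) * qbar < F x₀ μ := by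
      rw [hFform μ hμ x₀ hx₀pos]
      have hsum : ∑ i' ∈ Vi, (3 / (2 * r i') - x₀ * (4 / (r i' * μ i')))
          ≤ ∑ i' ∈ Vi, (3 * μ i' + x₀) * (μ i' - x₀) / (2 * r i' * (x₀ + μ i') ^ 2) :=
        Finset.sum_le_sum fun i hi => term_lb (hr i hi) (hμ i) hx₀pos
      rw [Finset.sum_sub_distrib, ← Finset.mul_sum, ← hS] at hsum
      have hx₀S : x₀ * S ≤ ε / 2 := by
        rw [hx₀, div_mul_eq_mul_div, div_le_div_iff₀ (by linarith) (by norm_num)]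
        nlinarith
      linarith
    obtain ⟨T, hT⟩ : ∃ y : ℝ, y = ∑ i' ∈ Vi, 2 * (μ i') ^ 2 / r i' := ⟨_, rfl⟩
    have hTnn : 0 ≤ T := hT ▸ Finset.sum_nonneg fun i hi => by
      have := hr i hi; have := hμ i; positivity
    obtain ⟨δ, hδ⟩ : ∃ y : ℝ, y = (k : ℝ) * qbar - d + ∑ i' ∈ Vi, 1 / (2 * r i') := ⟨_, rfl⟩
    have hδpos : 0 < δ := by rw [hδ]; linarith
    obtain ⟨x₁, hx₁⟩ : ∃ y : ℝ, y = Real.sqrt (2 * T / δ) + 1 := ⟨_, rfl⟩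
    have hsqnn : 0 ≤ Real.sqrt (2 * T / δ) := Real.sqrt_nonneg _
    have hx₁1 : 1 ≤ x₁ := by rw [hx₁]; linarith
    have hx₁pos : 0 < x₁ := by linarith
    have hx₁sq : 2 * T / δ ≤ x₁ ^ 2 := by
      have h0 : 0 ≤ 2 * T / δ := by positivity
      have h1 : Real.sqrt (2 * T / δ) ≤ x₁ := by rw [hx₁]; linarith
      calc 2 * T / δ = Real.sqrt (2 * T / δ) ^ 2 := (Real.sq_sqrt h0).symm
        _ ≤ x₁ ^ 2 := by nlinarith
    -- upper endpoint: F x₁ μ < k qbar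
    have hFx₁ : F x₁ μ < (k : ℝ) * qbar := by
      rw [hFform μ hμ x₁ hx₁pos]
      have hsum : ∑ i' ∈ Vi, (3 * μ i' + x₁) * (μ i' - x₁) / (2 * r i' * (x₁ + μ i') ^ 2)
          ≤ ∑ i' ∈ Vi, (-(1 / (2 * r i')) + (2 * (μ i') ^ 2 / r i') / x₁ ^ 2) :=
        Finset.sum_le_sum fun i hi => term_ub (hr i hi) (hμ i) hx₁pos
      rw [Finset.sum_add_distrib, Finset.sum_neg_distrib, ← Finset.sum_div, ← hT] at hsum
      have hTx : T / x₁ ^ 2 < δ := by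
        rw [div_lt_iff₀ (pow_pos hx₁pos 2)]
        rw [div_le_iff₀ hδpos] at hx₁sq
        nlinarith [mul_pos hδpos (pow_pos hx₁pos 2)]
      linarith
    have hx₀x₁ : x₀ < x₁ := by
      by_contra hle
      push_neg at hle
      rcases eq_or_lt_of_le hle with heq | hlt
      · rw [heq] at hFx₁; linarith
      · have := hanti μ hμ x₁ x₀ hx₁pos hlt; linarith
    -- continuity
    have hcont : ContinuousOn (fun x : ℝ =>
        d + ∑ i' ∈ Vi, (3 * μ i' + x) * (μ i' - x) / (2 * r i' * (x + μ i') ^ 2))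
        (Set.Icc x₀ x₁) := by
      apply ContinuousOn.add continuousOn_const
      apply continuousOn_finset_sum
      intro i hi
      apply ContinuousOn.div
      · fun_prop
      · fun_prop
      · intro x hx
        have hxpos : 0 < x := lt_of_lt_of_le hx₀pos hx.1
        have h1 := hr i hi; have h2 := hμ i
        positivity
    have hcontF : ContinuousOn (fun x => F x μ) (Set.Icc x₀ x₁) := by
      apply ContinuousOn.congr hcont
      intro x hx
      exact hFform μ hμ x (lt_of_lt_of_le hx₀pos hx.1)
    -- IVT
    have hmem : (k : ℝ) * qbar ∈ Set.Icc (F x₁ μ) (F x₀ μ) := ⟨hFx₁.le, hFx₀.le⟩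
    obtain ⟨x, hxmem, hxval⟩ := intermediate_value_Icc' hx₀x₁.le hcontF hmem
    replace hxval : F x μ = (k : ℝ) * qbar := hxval
    have hxpos : 0 < x := lt_of_lt_of_le hx₀pos hxmem.1
    refine ⟨x, ⟨hxpos, hxval⟩, ?_⟩
    rintro y ⟨hypos, hyval⟩
    rcases lt_trichotomy y x with h | h | h
    · have := hanti μ hμ y x hypos h; rw [hxval, hyval] at this; linarith
    · exact h
    · have := hanti μ hμ x y hxpos h; rw [hxval, hyval] at this; linarith
  · -- monotonicity of g
    intro g hg i' hi' μ μ' hμ hμ' heq hlt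
    obtain ⟨hgμpos, hgμval⟩ := hg μ hμ
    obtain ⟨hgμ'pos, hgμ'val⟩ := hg μ' hμ'
    -- F (g μ) μ < F (g μ) μ'
    have hkey : F (g μ) μ < F (g μ) μ' := by
      rw [hFform μ hμ (g μ) hgμpos, hFform μ' hμ' (g μ) hgμpos]
      have := Finset.sum_lt_sum
        (f := fun i => (3 * μ i + g μ) * (μ i - g μ) / (2 * r i * (g μ + μ i) ^ 2))
        (g := fun i => (3 * μ' i + g μ) * (μ' i - g μ) / (2 * r i * (g μ + μ' i) ^ 2))
        (s := Vi)
        (fun i hi => by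
          rcases eq_or_ne i i' with rfl | hne
          · exact (term_lt_m (hr i hi) hgμpos (hμ i) hlt).le
          · rw [heq i hne])
        ⟨i', hi', term_lt_m (hr i' hi') hgμpos (hμ i') hlt⟩
      linarith
    rw [hgμval] at hkey
    by_contra hle
    push_neg at hle
    rcases eq_or_lt_of_le hle with h | h
    · rw [h] at hgμ'val; linarith
    · have := hanti μ' hμ' (g μ') (g μ) hgμ'pos h
      rw [hgμ'val] at this; linarith
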